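/- Let V(u) be the algebra of a nonzero cubic form u ≠ 0 on a finite-dimensional real inner product space. If x is a maximizer of ⟨x, x²⟩ on the unit sphere ⟨x,x⟩ = 1 and x² ≠ 0, then c := x/⟨x², x⟩ is a nonzero idempotent (c² = c). In particular, V(u) contains a nonzero idempotent provided ⟨x,x²⟩ attains a positive maximum on the unit sphere. -/

import Mathlib

open RealInnerProductSpace

/-- If `x` maximizes `⟪x, x²⟫` on the unit sphere and `x² ≠ 0`, then
`c = x / ⟪x², x⟫` is a nonzero idempotent of the algebra of the cubic form `u`. -/
theorem stmt_3 {V : Type*} [NormedAddCommGroup V] [InnerProductSpace ℝ V]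
    [FiniteDimensional ℝ V]
    (u : V → ℝ) (hu : u ≠ 0) (T : V → V → V → ℝ)
    (hT : ∀ x y z, T x y z =
      u (x + y + z) - u (x + y) - u (x + z) - u (y + z) + u x + u y + u z)
    (hlin : ∀ y z, IsLinearMap ℝ (fun x => T x y z))
    (hcub : ∀ x, 6 * u x = T x x x)
    (mul : V → V → V)
    (hmul : ∀ x y z, ⟪mul x y, z⟫ = T x y z)
    (x : V) (hxs : ⟪x, x⟫ = 1)
    (hmax : IsMaxOn (fun y => ⟪y, mul y y⟫) {y : V | ⟪y, y⟫ = 1} x)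
    (hx2 : mul x x ≠ 0) :
    (⟪mul x x, x⟫)⁻¹ • x ≠ 0 ∧
      mul ((⟪mul x x, x⟫)⁻¹ • x) ((⟪mul x x, x⟫)⁻¹ • x) =
        (⟪mul x x, x⟫)⁻¹ • x := by
  classical
  -- symmetry of T
  have Tsym12 : ∀ a b c : V, T a b c = T b a c := by
    intro a b c
    rw [hT, hT, add_comm b a]
    ring
  have Tsym23 : ∀ a b c : V, T a b c = T a c b := by
    intro a b c
    rw [hT, hT, add_right_comm a c b, add_comm c b]
    ring
  have Tsym13 : ∀ a b c : V, T a b c = T c b a := by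
    intro a b c; rw [Tsym12, Tsym23, Tsym12]
  -- bilinearity of mul
  have hmul_add : ∀ a b c : V, mul (a + b) c = mul a c + mul b c := by
    intro a b c
    refine ext_inner_right ℝ fun v => ?_
    rw [inner_add_left, hmul, hmul, hmul, (hlin c v).map_add]
  have hmul_smul : ∀ (r : ℝ) (a c : V), mul (r • a) c = r • mul a c := by
    intro r a c
    refine ext_inner_right ℝ fun v => ?_
    rw [inner_smul_left, hmul, hmul, (hlin c v).map_smul]
    simp
  have hmul_comm : ∀ a b : V, mul a b = mul b a := by
    intro a b
    refine ext_inner_right ℝ fun v => ?_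
    rw [hmul, hmul, Tsym12]
  have hmul_add' : ∀ a b c : V, mul c (a + b) = mul c a + mul c b := by
    intro a b c; rw [hmul_comm, hmul_add, hmul_comm a, hmul_comm b]
  have hmul_smul' : ∀ (r : ℝ) (a c : V), mul c (r • a) = r • mul c a := by
    intro r a c; rw [hmul_comm, hmul_smul, hmul_comm]
  -- bundle mul as a continuous bilinear map
  let B : V →ₗ[ℝ] V →ₗ[ℝ] V := LinearMap.mk₂ ℝ mul hmul_add
    (fun r a c => hmul_smul r a c) (fun a b c => hmul_add' b c a)
    (fun r a c => hmul_smul' r c a)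
  let B₁ : V →ₗ[ℝ] (V →L[ℝ] V) :=
    { toFun := fun a => LinearMap.toContinuousLinearMap (B a)
      map_add' := by intro a b; ext v; simp [B, hmul_add]
      map_smul' := by intro r a; ext v; simp [B, hmul_smul] }
  let Bc : V →L[ℝ] V →L[ℝ] V := LinearMap.toContinuousLinearMap B₁
  have hBc : ∀ a b : V, Bc a b = mul a b := fun a b => rfl
  have hbb : IsBoundedBilinearMap ℝ fun p : V × V => Bc p.1 p.2 :=
    Bc.isBoundedBilinearMap
  -- strict derivative of y ↦ mul y y
  have hm : HasStrictFDerivAt (fun y : V => mul y y)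
      ((hbb.deriv (x, x)).comp ((ContinuousLinearMap.id ℝ V).prod
        (ContinuousLinearMap.id ℝ V))) x := by
    have hpair : HasStrictFDerivAt (fun y : V => (y, y))
        ((ContinuousLinearMap.id ℝ V).prod (ContinuousLinearMap.id ℝ V)) x :=
      HasStrictFDerivAt.prodMk (hasStrictFDerivAt_id x) (hasStrictFDerivAt_id x)
    exact HasStrictFDerivAt.comp (f := fun y : V => (y, y)) x
      (hbb.hasStrictFDerivAt (x, x)) hpair
  -- strict derivative of the objective and the constraint
  have hφ : HasStrictFDerivAt (fun y : V => ⟪y, mul y y⟫)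
      ((fderivInnerCLM ℝ (x, mul x x)).comp
        ((ContinuousLinearMap.id ℝ V).prod
          ((hbb.deriv (x, x)).comp ((ContinuousLinearMap.id ℝ V).prod
            (ContinuousLinearMap.id ℝ V))))) x :=
    (hasStrictFDerivAt_id x).inner ℝ hm
  have hf : HasStrictFDerivAt (fun y : V => ⟪y, y⟫)
      ((fderivInnerCLM ℝ (x, x)).comp
        ((ContinuousLinearMap.id ℝ V).prod (ContinuousLinearMap.id ℝ V))) x :=
    (hasStrictFDerivAt_id x).inner ℝ (hasStrictFDerivAt_id x)
  -- Lagrange multipliers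
  have hextr : IsLocalExtrOn (fun y : V => ⟪y, mul y y⟫)
      {y : V | ⟪y, y⟫ = (fun y : V => ⟪y, y⟫) x} x := by
    refine Or.inr ?_
    have hset : {y : V | ⟪y, y⟫ = (fun y : V => ⟪y, y⟫) x} = {y : V | ⟪y, y⟫ = 1} := by
      simp only [hxs]
    rw [hset]
    exact hmax.filter_mono inf_le_right
  obtain ⟨a, b, hab, heq⟩ :=
    hextr.exists_multipliers_of_hasStrictFDerivAt_1d hf hφ
  -- evaluate the derivative identity
  have key : ∀ h : V, 2 * a * ⟪x, h⟫ + 3 * b * ⟪mul x x, h⟫ = 0 := by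
    intro h
    have hh := DFunLike.congr_fun heq h
    simp only [ContinuousLinearMap.add_apply, ContinuousLinearMap.coe_smul',
      Pi.smul_apply, ContinuousLinearMap.comp_apply, ContinuousLinearMap.prod_apply,
      ContinuousLinearMap.coe_id', id, fderivInnerCLM_apply,
      IsBoundedBilinearMap.deriv_apply, ContinuousLinearMap.zero_apply,
      smul_eq_mul] at hh
    have e1 : ⟪x, Bc h x⟫ = ⟪mul x x, h⟫ := by
      rw [hBc, real_inner_comm, hmul, Tsym13, Tsym12, ← hmul]
    have e2 : ⟪x, Bc x h⟫ = ⟪mul x x, h⟫ := by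
      rw [hBc, real_inner_comm, hmul, Tsym13, Tsym23, Tsym12, ← hmul]
    have e3 : ⟪h, mul x x⟫ = ⟪mul x x, h⟫ := real_inner_comm _ _
    rw [inner_add_right, e1, e2, e3] at hh
    have e4 := real_inner_comm h x
    first
      | linear_combination hh
      | linear_combination hh + 2 * a * e4
      | linear_combination hh - 2 * a * e4
      | linear_combination hh + a * e4
      | linear_combination hh - a * e4
  have hvec : (2 * a) • x + (3 * b) • mul x x = 0 := by
    have h0 := key ((2 * a) • x + (3 * b) • mul x x)
    rw [← inner_self_eq_zero (𝕜 := ℝ), inner_add_left, real_inner_smul_left,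
      real_inner_smul_left]
    linear_combination h0
  have hxne : x ≠ 0 := by
    intro h; rw [h, inner_zero_left] at hxs; norm_num at hxs
  have hb : b ≠ 0 := by
    intro hb0
    have ha : a ≠ 0 := by
      intro ha0; exact hab (Prod.ext ha0 hb0)
    rw [hb0] at hvec
    simp only [mul_zero, zero_smul, add_zero] at hvec
    have h2a : (2 * a) ≠ 0 := mul_ne_zero two_ne_zero ha
    exact hxne ((smul_eq_zero.mp hvec).resolve_left h2a)
  have h3b : (3 * b) ≠ 0 := mul_ne_zero three_ne_zero hb
  have hmu : mul x x = ((3 * b)⁻¹ * (-(2 * a))) • x := by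
    have hstep : (3 * b) • mul x x = (-(2 * a)) • x := by
      rw [neg_smul]
      have := eq_neg_of_add_eq_zero_right hvec
      exact this
    calc mul x x = (3 * b)⁻¹ • ((3 * b) • mul x x) := by
          rw [smul_smul, inv_mul_cancel₀ h3b, one_smul]
      _ = (3 * b)⁻¹ • ((-(2 * a)) • x) := by rw [hstep]
      _ = _ := by rw [smul_smul]
  set μ : ℝ := (3 * b)⁻¹ * (-(2 * a)) with hμdef
  have hlam : ⟪mul x x, x⟫ = μ := by
    rw [hmu, real_inner_smul_left, hxs, mul_one]
  have hμ : μ ≠ 0 := by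
    intro h0; exact hx2 (by rw [hmu, h0, zero_smul])
  have hlamne : ⟪mul x x, x⟫ ≠ 0 := by rw [hlam]; exact hμ
  refine ⟨smul_ne_zero (inv_ne_zero hlamne) hxne, ?_⟩
  rw [hmul_smul, hmul_smul', smul_smul, hlam, hmu, smul_smul]
  congr 1
  rw [mul_assoc, inv_mul_cancel₀ hμ, mul_one]
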